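/- arXiv:1202.3500 — 3 statements merged into one kernel-verified Lean document; each statement's English description precedes it below -/
import Mathlib

section
/- Let V be a finite nonempty set of first-order variables, let L=(S,s₀,Δ,ρ) be a (ground) labeled transition system, and let φ be an Lμω formula all of whose free first-order variables lie in V. Then L ⊨ φ (i.e. the constant valuation x↦s₀ satisfies φ) if and only if Clone_V(L) ⊨ φ̂, where φ̂ is the one-dimensional translation of φ and Clone_V(L) is the V-clone of L. -/
/-- A labeled transition system over edge labels `Λ` and atomic propositions `P`. -/
structure LTS (Λ P : Type) where
  S : Type
  s0 : S
  Tr : S → Λ → S → Prop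
  rho : S → Set P

/-- Formulas of the higher-dimensional modal μ-calculus Lμω. -/
inductive Formula (Λ P V V2 : Type) : Type
  | prop : P → V → Formula Λ P V V2
  | svar : V2 → Formula Λ P V V2
  | neg : Formula Λ P V V2 → Formula Λ P V V2
  | and : Formula Λ P V V2 → Formula Λ P V V2 → Formula Λ P V V2
  | dia : Λ → V → Formula Λ P V V2 → Formula Λ P V V2
  | mu : V2 → Formula Λ P V V2 → Formula Λ P V V2
  | repl : (V → V) → Formula Λ P V V2 → Formula Λ P V V2

variable {Λ P V V2 : Type}

/-- Semantics of Lμω : a set of first-order valuations. -/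
def sem [DecidableEq V] [DecidableEq V2] (L : LTS Λ P) :
    Formula Λ P V V2 → (V2 → Set (V → L.S)) → Set (V → L.S)
  | .prop p x, _ => {v | p ∈ L.rho (v x)}
  | .svar X, 𝒱 => 𝒱 X
  | .neg φ, 𝒱 => (sem L φ 𝒱)ᶜ
  | .and φ ψ, 𝒱 => sem L φ 𝒱 ∩ sem L ψ 𝒱
  | .dia a x φ, 𝒱 => {v | ∃ s, L.Tr (v x) a s ∧ Function.update v x s ∈ sem L φ 𝒱}
  | .mu X φ, 𝒱 => ⋂₀ {Q | sem L φ (Function.update 𝒱 X Q) ⊆ Q}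
  | .repl κ φ, 𝒱 => {v | (fun z => v (κ z)) ∈ sem L φ 𝒱}

/-- Derived operator: disjunction. -/
def Formula.or (φ ψ : Formula Λ P V V2) : Formula Λ P V V2 := .neg (.and (.neg φ) (.neg ψ))

/-- Derived operator: box modality. -/
def Formula.box (a : Λ) (x : V) (φ : Formula Λ P V V2) : Formula Λ P V V2 :=
  .neg (.dia a x (.neg φ))

/-- Replace every occurrence of the second-order variable `X` by `¬X`. -/
def Formula.substNeg [DecidableEq V2] (X : V2) : Formula Λ P V V2 → Formula Λ P V V2
  | .prop p x => .prop p x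
  | .svar Y => if Y = X then .neg (.svar Y) else .svar Y
  | .neg φ => .neg (φ.substNeg X)
  | .and φ ψ => .and (φ.substNeg X) (ψ.substNeg X)
  | .dia a x φ => .dia a x (φ.substNeg X)
  | .mu Y φ => .mu Y (φ.substNeg X)
  | .repl κ φ => .repl κ (φ.substNeg X)

/-- Derived operator: greatest fixed point, `νX.φ := ¬μX.¬φ[X:=¬X]`. -/
def Formula.nu [DecidableEq V2] (X : V2) (φ : Formula Λ P V V2) : Formula Λ P V V2 :=
  .neg (.mu X (.neg (φ.substNeg X)))

/-- Falsity, definable as `μX.X`. -/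
def Formula.bot (X : V2) : Formula Λ P V V2 := .mu X (.svar X)

/-- Truth. -/
def Formula.top (X : V2) : Formula Λ P V V2 := .neg (.bot X)

/-- Finite conjunction (`X` is a dummy second-order variable for the empty case). -/
def bigAnd (X : V2) (l : List (Formula Λ P V V2)) : Formula Λ P V V2 := l.foldr .and (.top X)

/-- Finite disjunction. -/
def bigOr (X : V2) (l : List (Formula Λ P V V2)) : Formula Λ P V V2 := l.foldr .or (.bot X)

/-- Derived operator: implication. -/
def Formula.imp (φ ψ : Formula Λ P V V2) : Formula Λ P V V2 := .neg (.and φ (.neg ψ))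

/-- Derived operator: bi-implication. -/
def Formula.iff (φ ψ : Formula Λ P V V2) : Formula Λ P V V2 := .and (φ.imp ψ) (ψ.imp φ)

/-- Formulas of the ordinary (one-dimensional) modal μ-calculus. -/
inductive MFormula (Λ P V2 : Type) : Type
  | prop : P → MFormula Λ P V2
  | svar : V2 → MFormula Λ P V2
  | neg : MFormula Λ P V2 → MFormula Λ P V2
  | and : MFormula Λ P V2 → MFormula Λ P V2 → MFormula Λ P V2
  | dia : Λ → MFormula Λ P V2 → MFormula Λ P V2
  | mu : V2 → MFormula Λ P V2 → MFormula Λ P V2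

/-- Semantics of the ordinary modal μ-calculus: a set of states. -/
def msem {Λ P V2 : Type} [DecidableEq V2] (L : LTS Λ P) :
    MFormula Λ P V2 → (V2 → Set L.S) → Set L.S
  | .prop p, _ => {s | p ∈ L.rho s}
  | .svar X, 𝒱 => 𝒱 X
  | .neg φ, 𝒱 => (msem L φ 𝒱)ᶜ
  | .and φ ψ, 𝒱 => msem L φ 𝒱 ∩ msem L ψ 𝒱
  | .dia a φ, 𝒱 => {s | ∃ t, L.Tr s a t ∧ t ∈ msem L φ 𝒱}
  | .mu X φ, 𝒱 => ⋂₀ {Q | msem L φ (Function.update 𝒱 X Q) ⊆ Q}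

/-- Derived box modality of the ordinary modal μ-calculus. -/
def MFormula.box {Λ P V2 : Type} (a : Λ) (φ : MFormula Λ P V2) : MFormula Λ P V2 :=
  .neg (.dia a (.neg φ))

/-- The `V`-clone of a ground LTS `L`: states are valuations `V → L.S`; it interprets the
propositions `p_x` (pairs `(p,x)`), the modal labels `a_x` (pairs `(a,x)`, `Sum.inl`) and
the replacement labels `κ : V → V` (`Sum.inr`). -/
def clone {Λ P : Type} (V : Type) [DecidableEq V] (L : LTS Λ P) :
    LTS (Λ × V ⊕ (V → V)) (P × V) where
  S := V → L.S
  s0 := fun _ => L.s0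
  Tr := fun v ℓ v' =>
    match ℓ with
    | .inl (a, x) => ∃ t, L.Tr (v x) a t ∧ v' = Function.update v x t
    | .inr κ => v' = fun z => v (κ z)
  rho := fun v => {px | px.1 ∈ L.rho (v px.2)}

/-- The free second-order variables of an Lμω formula. -/
def fv2 {Λ P V V2 : Type} : Formula Λ P V V2 → Set V2
  | .prop _ _ => ∅
  | .svar X => {X}
  | .neg φ => fv2 φ
  | .and φ ψ => fv2 φ ∪ fv2 ψ
  | .dia _ _ φ => fv2 φ
  | .mu X φ => fv2 φ \ {X}
  | .repl _ φ => fv2 φ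

/-- The one-dimensional translation `φ ↦ φ̂` of an Lμω formula whose first-order variables
come from `V`, into the ordinary modal μ-calculus over propositions `P × V` and labels
`Λ × V ⊕ (V → V)`. -/
def hat {Λ P V V2 : Type} : Formula Λ P V V2 → MFormula (Λ × V ⊕ (V → V)) (P × V) V2
  | .prop p x => .prop (p, x)
  | .svar X => .svar X
  | .neg φ => .neg (hat φ)
  | .and φ ψ => .and (hat φ) (hat ψ)
  | .dia a x φ => .dia (.inl (a, x)) (hat φ)
  | .mu X φ => .mu X (hat φ)
  | .repl κ φ => .dia (.inr κ) (hat φ)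


theorem sem_eq_msem_clone {Λ P V V2 : Type} [DecidableEq V] [DecidableEq V2] (L : LTS Λ P) :
    ∀ (φ : Formula Λ P V V2) (𝒱 : V2 → Set (V → L.S)),
      sem L φ 𝒱 = msem (clone V L) (hat φ) 𝒱
  | .prop p x, 𝒱 => rfl
  | .svar X, 𝒱 => rfl
  | .neg φ, 𝒱 => by simp [sem, msem, hat, sem_eq_msem_clone L φ]; rfl
  | .and φ ψ, 𝒱 => by
      simp [sem, msem, hat, sem_eq_msem_clone L φ, sem_eq_msem_clone L ψ]; rfl
  | .dia a x φ, 𝒱 => by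
      ext v
      simp only [sem, msem, hat, sem_eq_msem_clone L φ, clone, Set.mem_setOf_eq]
      constructor
      · rintro ⟨s, h1, h2⟩; exact ⟨_, ⟨s, h1, rfl⟩, h2⟩
      · rintro ⟨t, ⟨s, h1, rfl⟩, h2⟩; exact ⟨s, h1, h2⟩
  | .mu X φ, 𝒱 => by
      have h : ∀ Q, sem L φ (Function.update 𝒱 X Q)
          = msem (clone V L) (hat φ) (Function.update 𝒱 X Q) :=
        fun Q => sem_eq_msem_clone L φ _
      simp only [sem, msem, hat, h]; rfl
  | .repl κ φ, 𝒱 => by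
      ext v
      simp only [sem, msem, hat, sem_eq_msem_clone L φ, clone, Set.mem_setOf_eq]
      constructor
      · intro h; exact ⟨_, rfl, h⟩
      · rintro ⟨t, rfl, h⟩; exact h

/-- Theorem 1 of the paper. Let `V` be a finite nonempty set of
first-order variables, `L` a ground LTS, and `φ` a closed Lμω formula whose first-order
variables lie in `V`.  Then `L ⊨ φ` (the constant valuation `x ↦ s₀` satisfies `φ`)
iff `Clone_V(L) ⊨ φ̂`. -/
theorem clone_reduction {Λ P V V2 : Type} [Fintype V] [Nonempty V] [DecidableEq V]
    [DecidableEq V2] (L : LTS Λ P) (φ : Formula Λ P V V2) (hclosed : fv2 φ = ∅) :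
    ((fun _ => L.s0) ∈ sem L φ (fun _ => ∅)) ↔
      (clone V L).s0 ∈ msem (clone V L) (hat φ) (fun _ => ∅) := by
  rw [sem_eq_msem_clone]; exact Iff.rfl
end

section
/- The higher-dimensional modal μ-calculus is closed under bisimulation: for every LTS L, every closed Lμω formula φ, and first-order valuations v, v', if v ∈ ⟦φ⟧_L and v ∼ v' (i.e. v(x) and v'(x) are bisimilar states for every first-order variable x), then v' ∈ ⟦φ⟧_L. -/
variable {Λ P V V2 : Type}

/-- A simulation on an LTS: related states satisfy the same propositions and every move
of the first state can be matched by the second. -/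
def IsSimulation {Λ P : Type} (L : LTS Λ P) (R : L.S → L.S → Prop) : Prop :=
  ∀ s₁ s₂, R s₁ s₂ →
    (∀ p, p ∈ L.rho s₁ ↔ p ∈ L.rho s₂) ∧
    ∀ a s₁', L.Tr s₁ a s₁' → ∃ s₂', L.Tr s₂ a s₂' ∧ R s₁' s₂'

/-- A bisimulation is a symmetric simulation (`R = R⁻¹`). -/
def IsBisimulation {Λ P : Type} (L : LTS Λ P) (R : L.S → L.S → Prop) : Prop :=
  IsSimulation L R ∧ ∀ s t, R s t ↔ R t s

/-- Two states are bisimilar if some bisimulation contains them. -/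
def Bisimilar {Λ P : Type} (L : LTS Λ P) (s t : L.S) : Prop :=
  ∃ R, IsBisimulation L R ∧ R s t

/-- Two first-order valuations are bisimilar if they are pointwise bisimilar. -/
def BisimilarVal {Λ P V : Type} (L : LTS Λ P) (v v' : V → L.S) : Prop :=
  ∀ x, Bisimilar L (v x) (v' x)

/-- `Polarity X φ true` (`false`) means every free occurrence of `X` in `φ` lies under an
even (odd) number of negations. -/
def Polarity {Λ P V V2 : Type} (X : V2) : Formula Λ P V V2 → Bool → Prop
  | .prop _ _, _ => True
  | .svar Y, b => Y = X → b = true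
  | .neg φ, b => Polarity X φ (!b)
  | .and φ ψ, b => Polarity X φ b ∧ Polarity X ψ b
  | .dia _ _ φ, b => Polarity X φ b
  | .mu Y φ, b => Y = X ∨ Polarity X φ b
  | .repl _ φ, b => Polarity X φ b

/-- Well-formedness: every μ-bound second-order variable occurs only under an even number
of negations underneath its binder. -/
def WellFormed {Λ P V V2 : Type} : Formula Λ P V V2 → Prop
  | .prop _ _ => True
  | .svar _ => True
  | .neg φ => WellFormed φ
  | .and φ ψ => WellFormed φ ∧ WellFormed ψ
  | .dia _ _ φ => WellFormed φ
  | .mu X φ => Polarity X φ true ∧ WellFormed φ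
  | .repl _ φ => WellFormed φ

section Aux

variable {Λ P V V2 : Type}

lemma bisim_refl (L : LTS Λ P) (s : L.S) : Bisimilar L s s := by
  refine ⟨Eq, ⟨?_, fun s t => eq_comm⟩, rfl⟩
  rintro s₁ s₂ rfl
  exact ⟨fun _ => Iff.rfl, fun a s' h => ⟨s', h, rfl⟩⟩

lemma bisim_symm {L : LTS Λ P} {s t : L.S} (h : Bisimilar L s t) : Bisimilar L t s := by
  obtain ⟨R, hR, hst⟩ := h
  exact ⟨R, hR, (hR.2 s t).mp hst⟩

lemma bisim_trans {L : LTS Λ P} {s t u : L.S}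
    (h1 : Bisimilar L s t) (h2 : Bisimilar L t u) : Bisimilar L s u := by
  obtain ⟨R, ⟨hRs, hRsym⟩, hst⟩ := h1
  obtain ⟨R', ⟨hR's, hR'sym⟩, htu⟩ := h2
  refine ⟨fun a b => (∃ c, R a c ∧ R' c b) ∨ (∃ c, R' a c ∧ R c b), ⟨?_, ?_⟩, Or.inl ⟨t, hst, htu⟩⟩
  · rintro s₁ s₂ (⟨c, h1, h2⟩ | ⟨c, h1, h2⟩)
    · refine ⟨fun p => ((hRs _ _ h1).1 p).trans ((hR's _ _ h2).1 p), ?_⟩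
      intro a s₁' hs
      obtain ⟨c', hc', h1'⟩ := (hRs _ _ h1).2 a s₁' hs
      obtain ⟨s₂', hs₂', h2'⟩ := (hR's _ _ h2).2 a c' hc'
      exact ⟨s₂', hs₂', Or.inl ⟨c', h1', h2'⟩⟩
    · refine ⟨fun p => ((hR's _ _ h1).1 p).trans ((hRs _ _ h2).1 p), ?_⟩
      intro a s₁' hs
      obtain ⟨c', hc', h1'⟩ := (hR's _ _ h1).2 a s₁' hs
      obtain ⟨s₂', hs₂', h2'⟩ := (hRs _ _ h2).2 a c' hc'
      exact ⟨s₂', hs₂', Or.inr ⟨c', h1', h2'⟩⟩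
  · rintro a b
    constructor
    · rintro (⟨c, h1, h2⟩ | ⟨c, h1, h2⟩)
      · exact Or.inr ⟨c, (hR'sym _ _).mp h2, (hRsym _ _).mp h1⟩
      · exact Or.inl ⟨c, (hRsym _ _).mp h2, (hR'sym _ _).mp h1⟩
    · rintro (⟨c, h1, h2⟩ | ⟨c, h1, h2⟩)
      · exact Or.inr ⟨c, (hR'sym _ _).mp h2, (hRsym _ _).mp h1⟩
      · exact Or.inl ⟨c, (hRsym _ _).mp h2, (hR'sym _ _).mp h1⟩

/-- A set of valuations closed under pointwise bisimilarity. -/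
def BClosed (L : LTS Λ P) (A : Set (V → L.S)) : Prop :=
  ∀ ⦃v v'⦄, v ∈ A → BisimilarVal L v v' → v' ∈ A

/-- Monotonicity/antitonicity of the semantics in a second-order variable,
according to its polarity. -/
lemma sem_mono [DecidableEq V] [DecidableEq V2] (L : LTS Λ P) (X : V2) :
    ∀ (φ : Formula Λ P V V2) (b : Bool), Polarity X φ b →
      ∀ (𝒱 : V2 → Set (V → L.S)) (Q Q' : Set (V → L.S)), Q ⊆ Q' →
        sem L φ (Function.update 𝒱 X (cond b Q Q')) ⊆
          sem L φ (Function.update 𝒱 X (cond b Q' Q)) := by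
  intro φ
  induction φ with
  | prop p x => intro b _ 𝒱 Q Q' _; exact fun v hv => hv
  | svar Y =>
    intro b hpol 𝒱 Q Q' hQQ v hv
    by_cases hYX : Y = X
    · subst hYX
      have hb := hpol rfl
      subst hb
      simp only [sem, Function.update_self] at hv ⊢
      exact hQQ hv
    · simp only [sem, Function.update_of_ne hYX] at hv ⊢
      exact hv
  | neg φ ih =>
    intro b hpol 𝒱 Q Q' hQQ v hv
    have := ih (!b) hpol 𝒱 Q Q' hQQ
    intro hv'
    cases b
    · exact hv (this hv')
    · exact hv (this hv')
  | and φ ψ ihφ ihψ =>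
    intro b hpol 𝒱 Q Q' hQQ v hv
    exact ⟨ihφ b hpol.1 𝒱 Q Q' hQQ hv.1, ihψ b hpol.2 𝒱 Q Q' hQQ hv.2⟩
  | dia a x φ ih =>
    intro b hpol 𝒱 Q Q' hQQ v hv
    obtain ⟨s, hs, hmem⟩ := hv
    exact ⟨s, hs, ih b hpol 𝒱 Q Q' hQQ hmem⟩
  | mu Y φ ih =>
    intro b hpol 𝒱 Q Q' hQQ v hv
    by_cases hYX : Y = X
    · subst hYX
      simp only [sem] at hv ⊢
      intro S hS
      apply hv S
      simp only [Set.mem_setOf_eq, Function.update_idem] at hS ⊢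
      exact hS
    · rcases hpol with h | hpol
      · exact absurd h hYX
      simp only [sem] at hv ⊢
      intro S hS
      have hcomm : ∀ (A : Set (V → L.S)),
          Function.update (Function.update 𝒱 X A) Y S =
            Function.update (Function.update 𝒱 Y S) X A := by
        intro A
        exact Function.update_comm (fun h => hYX h.symm) A S 𝒱
      apply hv S
      rw [Set.mem_setOf_eq, hcomm] at hS ⊢
      intro w hw
      exact hS (ih b hpol (Function.update 𝒱 Y S) Q Q' hQQ hw)
  | repl κ φ ih =>
    intro b hpol 𝒱 Q Q' hQQ v hv
    exact ih b hpol 𝒱 Q Q' hQQ hv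

/-- Main invariance lemma: semantics of well-formed formulas under bisim-closed
valuations are bisim-closed. -/
lemma sem_bclosed [DecidableEq V] [DecidableEq V2] (L : LTS Λ P) :
    ∀ (φ : Formula Λ P V V2), WellFormed φ →
      ∀ (𝒱 : V2 → Set (V → L.S)), (∀ X, BClosed L (𝒱 X)) → BClosed L (sem L φ 𝒱) := by
  intro φ
  induction φ with
  | prop p x =>
    intro _ 𝒱 _ v v' hv hsim
    obtain ⟨R, ⟨hRs, _⟩, hR⟩ := hsim x
    exact ((hRs _ _ hR).1 p).mp hv
  | svar Y => intro _ 𝒱 h𝒱 v v' hv hsim; exact h𝒱 Y hv hsim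
  | neg φ ih =>
    intro hwf 𝒱 h𝒱 v v' hv hsim hv'
    exact hv (ih hwf 𝒱 h𝒱 hv' (fun x => bisim_symm (hsim x)))
  | and φ ψ ihφ ihψ =>
    intro hwf 𝒱 h𝒱 v v' hv hsim
    exact ⟨ihφ hwf.1 𝒱 h𝒱 hv.1 hsim, ihψ hwf.2 𝒱 h𝒱 hv.2 hsim⟩
  | dia a x φ ih =>
    intro hwf 𝒱 h𝒱 v v' hv hsim
    obtain ⟨s, hs, hmem⟩ := hv
    obtain ⟨R, hRbisim, hR⟩ := hsim x
    obtain ⟨s', hs', hRss'⟩ := (hRbisim.1 _ _ hR).2 a s hs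
    refine ⟨s', hs', ih hwf 𝒱 h𝒱 hmem ?_⟩
    intro y
    by_cases hyx : y = x
    · subst hyx; simp only [Function.update_self]; exact ⟨R, hRbisim, hRss'⟩
    · simp only [Function.update_of_ne hyx]; exact hsim y
  | mu X φ ih =>
    intro hwf 𝒱 h𝒱 v v' hv hsim
    simp only [sem] at hv ⊢
    intro Q hQ
    -- the bisimulation-kernel of Q
    set Qh : Set (V → L.S) := {w | ∀ w', BisimilarVal L w w' → w' ∈ Q} with hQh
    have hQhsub : Qh ⊆ Q := fun w hw => hw w (fun x => bisim_refl L (w x))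
    have hQhclosed : BClosed L Qh := by
      intro w w' hw hww' u hu
      exact hw u (fun x => bisim_trans (hww' x) (hu x))
    have h𝒱' : ∀ Y, BClosed L (Function.update 𝒱 X Qh Y) := by
      intro Y
      by_cases hYX : Y = X
      · subst hYX; rw [Function.update_self]; exact hQhclosed
      · rw [Function.update_of_ne hYX]; exact h𝒱 Y
    have hsemcl : BClosed L (sem L φ (Function.update 𝒱 X Qh)) := ih hwf.2 _ h𝒱'
    have hmono : sem L φ (Function.update 𝒱 X Qh) ⊆ sem L φ (Function.update 𝒱 X Q) :=
      sem_mono L X φ true hwf.1 𝒱 Qh Q hQhsub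
    have hQhpre : sem L φ (Function.update 𝒱 X Qh) ⊆ Qh := by
      intro w hw w' hww'
      exact hQ (hmono (hsemcl hw hww'))
    exact (hv Qh hQhpre) v' hsim
  | repl κ φ ih =>
    intro hwf 𝒱 h𝒱 v v' hv hsim
    exact ih hwf 𝒱 h𝒱 hv (fun z => hsim (κ z))

end Aux

/-- Otto: Lμω is closed under bisimulation: if `φ` is a closed Lμω
formula, `v ∈ ⟦φ⟧_L`, and `v ∼ v'` pointwise, then `v' ∈ ⟦φ⟧_L`. -/
theorem bisimulation_invariance {Λ P V V2 : Type} [DecidableEq V] [DecidableEq V2]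
    (L : LTS Λ P) (φ : Formula Λ P V V2) (hwf : WellFormed φ) (hclosed : fv2 φ = ∅)
    (v v' : V → L.S) (hv : v ∈ sem L φ (fun _ => ∅)) (hsim : BisimilarVal L v v') :
    v' ∈ sem L φ (fun _ => ∅) := by
  have hcl : ∀ X : V2, BClosed L ((fun _ => (∅ : Set (V → L.S))) X) := by
    intro X v v' hv _; exact hv
  exact sem_bclosed L φ hwf _ hcl hv hsim
end

section
/- The formula φ_bis := νX. (⋀_{p∈P} (p(x) ⇔ p(y))) ∧ (⋀_{a∈Λ} [a]_x ⟨a⟩_y X) ∧ {(x,y)←(y,x)}X characterizes bisimilarity: for every finite LTS L over finite sets Λ of labels and P of propositions and every first-order valuation v, v ∈ ⟦φ_bis⟧_L if and only if v(x) ∼ v(y), i.e. the states v(x) and v(y) are bisimilar. -/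
variable {Λ P V V2 : Type}

/-- The variable replacement swapping `x` and `y`. -/
def swapRepl {V : Type} [DecidableEq V] (x y : V) : V → V :=
  fun z => if z = x then y else if z = y then x else z

/-- The formula
`νX. ⋀_{p∈P} (p(x) ⇔ p(y)) ∧ ⋀_{a∈Λ} [a]_x⟨a⟩_y X ∧ {(x,y)←(y,x)}X`
(second-order variables are natural numbers; `X` is `0`, `1` is a dummy). -/
noncomputable def phiBis (Λ P : Type) [Fintype Λ] [Fintype P] {V : Type} [DecidableEq V]
    (x y : V) : Formula Λ P V ℕ :=
  Formula.nu 0 (.and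
    (bigAnd 1 ((Finset.univ : Finset P).toList.map fun p =>
      Formula.iff (.prop p x) (.prop p y)))
    (.and
      (bigAnd 1 ((Finset.univ : Finset Λ).toList.map fun a =>
        Formula.box a x (.dia a y (.svar 0))))
      (.repl (swapRepl x y) (.svar 0))))

section Aux

variable {Λ P V V2 : Type}

/-- `X` is never bound by a `mu` in `φ`. -/
def NoBind (X : V2) : Formula Λ P V V2 → Prop
  | .prop _ _ => True
  | .svar _ => True
  | .neg φ => NoBind X φ
  | .and φ ψ => NoBind X φ ∧ NoBind X ψ
  | .dia _ _ φ => NoBind X φ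
  | .mu Y φ => Y ≠ X ∧ NoBind X φ
  | .repl _ φ => NoBind X φ

lemma sem_substNeg [DecidableEq V] [DecidableEq V2] (L : LTS Λ P) (X : V2)
    (φ : Formula Λ P V V2) (h : NoBind X φ) (𝒱 : V2 → Set (V → L.S)) :
    sem L (φ.substNeg X) 𝒱 = sem L φ (Function.update 𝒱 X (𝒱 X)ᶜ) := by
  induction φ generalizing 𝒱 with
  | prop p z => rfl
  | svar Y =>
    by_cases hY : Y = X
    · subst hY; simp [Formula.substNeg, sem]
    · simp [Formula.substNeg, sem, hY, Function.update_of_ne hY]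
  | neg φ ih => simp only [Formula.substNeg, sem, ih h]
  | and φ ψ ihφ ihψ => simp only [Formula.substNeg, sem, ihφ h.1, ihψ h.2]
  | dia a z φ ih => simp only [Formula.substNeg, sem, ih h]
  | mu Y φ ih =>
    obtain ⟨hYX, hφ⟩ := h
    simp only [Formula.substNeg, sem]
    have hset : {Q | sem L (φ.substNeg X) (Function.update 𝒱 Y Q) ⊆ Q} =
        {Q | sem L φ (Function.update (Function.update 𝒱 X (𝒱 X)ᶜ) Y Q) ⊆ Q} := by
      ext Q
      rw [Set.mem_setOf_eq, Set.mem_setOf_eq, ih hφ,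
        Function.update_of_ne (Ne.symm hYX), Function.update_comm hYX]
    rw [hset]
  | repl κ φ ih =>
    simp only [Formula.substNeg, sem, ih h]

lemma sem_nu_mem [DecidableEq V] [DecidableEq V2] (L : LTS Λ P) (X : V2)
    (φ : Formula Λ P V V2) (h : NoBind X φ) (𝒱 : V2 → Set (V → L.S)) (v : V → L.S) :
    v ∈ sem L (Formula.nu X φ) 𝒱 ↔
      ∃ Q : Set (V → L.S), Q ⊆ sem L φ (Function.update 𝒱 X Q) ∧ v ∈ Q := by
  simp only [Formula.nu, sem, Set.mem_compl_iff, Set.mem_sInter, Set.mem_setOf_eq]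
  push_neg
  constructor
  · rintro ⟨Q, hQ, hv⟩
    refine ⟨Qᶜ, ?_, hv⟩
    intro w hw
    by_contra hw'
    have : w ∈ Q := hQ ?_
    · exact hw this
    · rw [sem_substNeg L X φ h]
      simp only [Function.update_idem, Function.update_self]
      exact hw'
  · rintro ⟨Q, hQ, hv⟩
    refine ⟨Qᶜ, ?_, by simpa using hv⟩
    intro w hw
    simp only [Set.mem_compl_iff]
    intro hwQ
    apply hw
    rw [sem_substNeg L X φ h]
    simp only [Function.update_idem, Function.update_self, compl_compl]
    exact hQ hwQ

lemma sem_bot [DecidableEq V] [DecidableEq V2] (L : LTS Λ P) (X : V2)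
    (𝒱 : V2 → Set (V → L.S)) : sem L (Formula.bot X : Formula Λ P V V2) 𝒱 = ∅ := by
  apply Set.eq_empty_of_subset_empty
  intro v hv
  simp only [Formula.bot, sem, Set.mem_sInter, Set.mem_setOf_eq] at hv
  exact hv ∅ (by simp [sem])

lemma sem_top [DecidableEq V] [DecidableEq V2] (L : LTS Λ P) (X : V2)
    (𝒱 : V2 → Set (V → L.S)) : sem L (Formula.top X : Formula Λ P V V2) 𝒱 = Set.univ := by
  have h : sem L (Formula.top X : Formula Λ P V V2) 𝒱 = (sem L (Formula.bot X) 𝒱)ᶜ := rfl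
  rw [h, sem_bot, Set.compl_empty]

lemma mem_bigAnd [DecidableEq V] [DecidableEq V2] (L : LTS Λ P) (X : V2)
    (l : List (Formula Λ P V V2)) (𝒱 : V2 → Set (V → L.S)) (v : V → L.S) :
    v ∈ sem L (bigAnd X l) 𝒱 ↔ ∀ φ ∈ l, v ∈ sem L φ 𝒱 := by
  induction l with
  | nil => simp [bigAnd, sem_top]
  | cons φ l ih =>
    simp only [bigAnd, List.foldr_cons] at *
    simp only [sem, Set.mem_inter_iff, ih, List.mem_cons]
    constructor
    · rintro ⟨h1, h2⟩ ψ (rfl | hψ)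
      · exact h1
      · exact h2 ψ hψ
    · intro hh
      exact ⟨hh φ (Or.inl rfl), fun ψ hψ => hh ψ (Or.inr hψ)⟩

lemma noBind_bigAnd [DecidableEq V2] (X Y : V2) (hYX : Y ≠ X)
    (l : List (Formula Λ P V V2)) (hl : ∀ φ ∈ l, NoBind X φ) :
    NoBind X (bigAnd Y l) := by
  induction l with
  | nil => exact ⟨hYX, trivial⟩
  | cons φ l ih =>
    exact ⟨hl φ List.mem_cons_self, ih fun ψ hψ => hl ψ (List.mem_cons_of_mem _ hψ)⟩

end Aux
section Main

variable {Λ P V V2 : Type}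

lemma mem_iffProp [DecidableEq V] [DecidableEq V2] (L : LTS Λ P) (p : P) (x y : V)
    (𝒱 : V2 → Set (V → L.S)) (w : V → L.S) :
    w ∈ sem L (Formula.iff (.prop p x) (.prop p y)) 𝒱 ↔
      (p ∈ L.rho (w x) ↔ p ∈ L.rho (w y)) := by
  simp only [Formula.iff, Formula.imp, sem, Set.mem_inter_iff, Set.mem_compl_iff,
    Set.mem_setOf_eq]
  tauto

lemma mem_boxDia [DecidableEq V] (L : LTS Λ P) (a : Λ) (x y : V) (hxy : x ≠ y)
    (𝒱 : ℕ → Set (V → L.S)) (w : V → L.S) :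
    w ∈ sem L (Formula.box a x (.dia a y (.svar 0)) : Formula Λ P V ℕ) 𝒱 ↔
      ∀ s', L.Tr (w x) a s' → ∃ t', L.Tr (w y) a t' ∧
        Function.update (Function.update w x s') y t' ∈ 𝒱 0 := by
  simp only [Formula.box, sem, Set.mem_compl_iff, Set.mem_setOf_eq, not_exists, not_and,
    not_not, Function.update_of_ne (Ne.symm hxy)]
  push_neg
  rfl

/-- The body of `phiBis`. -/
noncomputable def phiBisBody (Λ P : Type) [Fintype Λ] [Fintype P] {V : Type} [DecidableEq V]
    (x y : V) : Formula Λ P V ℕ :=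
  .and
    (bigAnd 1 ((Finset.univ : Finset P).toList.map fun p =>
      Formula.iff (.prop p x) (.prop p y)))
    (.and
      (bigAnd 1 ((Finset.univ : Finset Λ).toList.map fun a =>
        Formula.box a x (.dia a y (.svar 0))))
      (.repl (swapRepl x y) (.svar 0)))

lemma noBind_phiBisBody (Λ P : Type) [Fintype Λ] [Fintype P] {V : Type} [DecidableEq V]
    (x y : V) : NoBind 0 (phiBisBody Λ P x y) := by
  refine ⟨?_, ?_, trivial⟩
  · apply noBind_bigAnd _ _ (by norm_num)
    intro φ hφ
    simp only [List.mem_map] at hφ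
    obtain ⟨p, _, rfl⟩ := hφ
    exact ⟨⟨trivial, trivial⟩, ⟨trivial, trivial⟩⟩
  · apply noBind_bigAnd _ _ (by norm_num)
    intro φ hφ
    simp only [List.mem_map] at hφ
    obtain ⟨a, _, rfl⟩ := hφ
    exact trivial

lemma mem_phiBisBody {Λ P V : Type} [Fintype Λ] [Fintype P] [DecidableEq V]
    (x y : V) (hxy : x ≠ y) (L : LTS Λ P) (𝒱 : ℕ → Set (V → L.S)) (w : V → L.S) :
    w ∈ sem L (phiBisBody Λ P x y) 𝒱 ↔
      (∀ p, p ∈ L.rho (w x) ↔ p ∈ L.rho (w y)) ∧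
      (∀ a s', L.Tr (w x) a s' → ∃ t', L.Tr (w y) a t' ∧
        Function.update (Function.update w x s') y t' ∈ 𝒱 0) ∧
      (fun z => w (swapRepl x y z)) ∈ 𝒱 0 := by
  have hmem : w ∈ sem L (phiBisBody Λ P x y) 𝒱 ↔
      w ∈ sem L (bigAnd 1 ((Finset.univ : Finset P).toList.map fun p =>
        Formula.iff (.prop p x) (.prop p y))) 𝒱 ∧
      w ∈ sem L (bigAnd 1 ((Finset.univ : Finset Λ).toList.map fun a =>
        Formula.box a x (.dia a y (.svar 0)))) 𝒱 ∧
      (fun z => w (swapRepl x y z)) ∈ 𝒱 0 := Iff.rfl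
  rw [hmem, mem_bigAnd, mem_bigAnd]
  refine and_congr ?_ (and_congr ?_ Iff.rfl)
  · constructor
    · intro h p
      exact (mem_iffProp L p x y 𝒱 w).mp
        (h _ (List.mem_map_of_mem (by simp)))
    · intro h φ hφ
      simp only [List.mem_map] at hφ
      obtain ⟨p, _, rfl⟩ := hφ
      exact (mem_iffProp L p x y 𝒱 w).mpr (h p)
  · constructor
    · intro h a
      exact (mem_boxDia L a x y hxy 𝒱 w).mp
        (h _ (List.mem_map_of_mem (by simp)))
    · intro h φ hφ
      simp only [List.mem_map] at hφ
      obtain ⟨a, _, rfl⟩ := hφ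
      exact (mem_boxDia L a x y hxy 𝒱 w).mpr (h a)

end Main
/-- the formula `phiBis` characterizes bisimilarity: over any finite LTS
(with finitely many labels and propositions), a valuation `v` satisfies it iff the
states `v x` and `v y` are bisimilar. -/
theorem phiBis_characterizes_bisimilarity {Λ P V : Type} [Fintype Λ] [Fintype P]
    [DecidableEq V] (x y : V) (hxy : x ≠ y) (L : LTS Λ P) [Fintype L.S]
    (v : V → L.S) :
    v ∈ sem L (phiBis Λ P x y) (fun _ => ∅) ↔ Bisimilar L (v x) (v y) := by
  have heq : phiBis Λ P x y = Formula.nu 0 (phiBisBody Λ P x y) := rfl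
  rw [heq, sem_nu_mem L 0 _ (noBind_phiBisBody Λ P x y)]
  constructor
  · rintro ⟨Q, hQ, hv⟩
    have hbody : ∀ w ∈ Q,
        (∀ p, p ∈ L.rho (w x) ↔ p ∈ L.rho (w y)) ∧
        (∀ a s', L.Tr (w x) a s' → ∃ t', L.Tr (w y) a t' ∧
          Function.update (Function.update w x s') y t' ∈ Q) ∧
        (fun z => w (swapRepl x y z)) ∈ Q := by
      intro w hw
      have := (mem_phiBisBody x y hxy L _ w).mp (hQ hw)
      rwa [Function.update_self] at this
    refine ⟨fun s t => ∃ w, w ∈ Q ∧ w x = s ∧ w y = t, ⟨?_, ?_⟩, ⟨v, hv, rfl, rfl⟩⟩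
    · rintro s t ⟨w, hw, rfl, rfl⟩
      obtain ⟨h1, h2, _⟩ := hbody w hw
      refine ⟨h1, ?_⟩
      intro a s' hs'
      obtain ⟨t', ht', hmem⟩ := h2 a s' hs'
      refine ⟨t', ht', Function.update (Function.update w x s') y t', hmem, ?_, ?_⟩
      · rw [Function.update_of_ne hxy, Function.update_self]
      · rw [Function.update_self]
    · have hsym : ∀ s t, (∃ w, w ∈ Q ∧ w x = s ∧ w y = t) →
          ∃ w, w ∈ Q ∧ w x = t ∧ w y = s := by
        rintro s t ⟨w, hw, rfl, rfl⟩
        refine ⟨fun z => w (swapRepl x y z), (hbody w hw).2.2, ?_, ?_⟩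
        · simp [swapRepl]
        · simp [swapRepl, Ne.symm hxy]
      intro s t
      exact ⟨hsym s t, hsym t s⟩
  · rintro ⟨R, ⟨hsim, hsymm⟩, hR⟩
    refine ⟨{w | R (w x) (w y)}, ?_, hR⟩
    intro w hw
    rw [mem_phiBisBody x y hxy L _ w, Function.update_self]
    obtain ⟨hprop, hstep⟩ := hsim _ _ hw
    refine ⟨hprop, ?_, ?_⟩
    · intro a s' hs'
      obtain ⟨t', ht', hRt⟩ := hstep a s' hs'
      refine ⟨t', ht', ?_⟩
      show R _ _
      rw [Function.update_of_ne hxy, Function.update_self, Function.update_self]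
      exact hRt
    · show R _ _
      have h1 : swapRepl x y x = y := by simp [swapRepl]
      have h2 : swapRepl x y y = x := by simp [swapRepl, Ne.symm hxy]
      simp only [h1, h2]
      exact (hsymm _ _).mp hw
end
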